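/- Let c : ℝ → ℝ be smooth with c(v) ≥ c₀ > 0, and let u, w, z, p, q, x, t : ℝ² → ℝ be smooth functions solving the semilinear system. Let (X₀,Y₀) be a point where w(X₀,Y₀) = π, and write u₀ = u(X₀,Y₀), z₀ = z(X₀,Y₀), p₀ = p(X₀,Y₀), q₀ = q(X₀,Y₀), x₀ = x(X₀,Y₀), t₀ = t(X₀,Y₀). Then there exist a constant C > 0 and a neighborhood N of (X₀,Y₀) such that for all (X,Y) ∈ N, writing x = x(X,Y) and t = t(X,Y): |(x − x₀) − c(u₀)(t − t₀) + ((1+cos z₀)·q₀/2)·(Y − Y₀)| ≤ C·(|X−X₀|⁴ + |Y−Y₀|² + |X−X₀|²·|Y−Y₀|), and |(x − x₀) + c(u₀)(t − t₀) − (w_X(X₀,Y₀)²·p₀/12)·(X − X₀)³| ≤ C·(|X−X₀|⁴ + |Y−Y₀|² + |X−X₀|²·|Y−Y₀|). -/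

import Mathlib

/-- Partial derivative in the `X`-direction. -/
noncomputable def dX (f : ℝ × ℝ → ℝ) (P : ℝ × ℝ) : ℝ := fderiv ℝ f P (1, 0)

/-- Partial derivative in the `Y`-direction. -/
noncomputable def dY (f : ℝ × ℝ → ℝ) (P : ℝ × ℝ) : ℝ := fderiv ℝ f P (0, 1)

/-- The semilinear system associated with the wave equation
`u_tt - c(u)(c(u)u_x)_x = 0`, in characteristic coordinates `(X,Y)`. -/
def SolvesSystem (c : ℝ → ℝ) (u w z p q x t : ℝ × ℝ → ℝ) : Prop :=
  ∀ P : ℝ × ℝ,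
    dX u P = Real.sin (w P) * p P / (4 * c (u P)) ∧
    dY u P = Real.sin (z P) * q P / (4 * c (u P)) ∧
    dY w P = deriv c (u P) / (8 * c (u P) ^ 2) * (Real.cos (z P) - Real.cos (w P)) * q P ∧
    dX z P = deriv c (u P) / (8 * c (u P) ^ 2) * (Real.cos (w P) - Real.cos (z P)) * p P ∧
    dY p P = deriv c (u P) / (8 * c (u P) ^ 2) * (Real.sin (z P) - Real.sin (w P)) * (p P * q P) ∧
    dX q P = deriv c (u P) / (8 * c (u P) ^ 2) * (Real.sin (w P) - Real.sin (z P)) * (p P * q P) ∧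
    dX x P = (1 + Real.cos (w P)) * p P / 4 ∧
    dY x P = -((1 + Real.cos (z P)) * q P) / 4 ∧
    dX t P = (1 + Real.cos (w P)) * p P / (4 * c (u P)) ∧
    dY t P = (1 + Real.cos (z P)) * q P / (4 * c (u P))

/-- All seven components are smooth on the whole plane. -/
def Smooth7 (u w z p q x t : ℝ × ℝ → ℝ) : Prop :=
  ContDiff ℝ (⊤ : ℕ∞) u ∧ ContDiff ℝ (⊤ : ℕ∞) w ∧ ContDiff ℝ (⊤ : ℕ∞) z ∧
  ContDiff ℝ (⊤ : ℕ∞) p ∧ ContDiff ℝ (⊤ : ℕ∞) q ∧ ContDiff ℝ (⊤ : ℕ∞) x ∧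
  ContDiff ℝ (⊤ : ℕ∞) t

set_option maxHeartbeats 2000000

open Real Set Metric
lemma hasDerivAt_sliceX (f : ℝ × ℝ → ℝ) (hf : Differentiable ℝ f) (X Y : ℝ) :
    HasDerivAt (fun s => f (s, Y)) (dX f (X, Y)) X := by
  have h1 : HasDerivAt (fun s : ℝ => (s, Y)) (((1:ℝ), (0:ℝ)) : ℝ × ℝ) X :=
    HasDerivAt.prodMk (hasDerivAt_id X) (hasDerivAt_const X Y)
  have h2 := (hf (X, Y)).hasFDerivAt
  simpa [dX, Function.comp_def] using (h2.comp_hasDerivAt X h1)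

lemma hasDerivAt_sliceY (f : ℝ × ℝ → ℝ) (hf : Differentiable ℝ f) (X Y : ℝ) :
    HasDerivAt (fun s => f (X, s)) (dY f (X, Y)) Y := by
  have h1 : HasDerivAt (fun s : ℝ => (X, s)) (((0:ℝ), (1:ℝ)) : ℝ × ℝ) Y :=
    HasDerivAt.prodMk (hasDerivAt_const Y X) (hasDerivAt_id Y)
  have h2 := (hf (X, Y)).hasFDerivAt
  simpa [dY, Function.comp_def] using (h2.comp_hasDerivAt Y h1)

lemma contDiff_dX (f : ℝ × ℝ → ℝ) (hf : ContDiff ℝ (⊤ : ℕ∞) f) : ContDiff ℝ (⊤ : ℕ∞) (dX f) := by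
  have h := hf.fderiv_right (m := (⊤ : ℕ∞)) (by simp)
  exact (ContinuousLinearMap.apply ℝ ℝ (((1:ℝ),(0:ℝ)) : ℝ × ℝ)).contDiff.comp h

lemma contDiff_dY (f : ℝ × ℝ → ℝ) (hf : ContDiff ℝ (⊤ : ℕ∞) f) : ContDiff ℝ (⊤ : ℕ∞) (dY f) := by
  have h := hf.fderiv_right (m := (⊤ : ℕ∞)) (by simp)
  exact (ContinuousLinearMap.apply ℝ ℝ (((0:ℝ),(1:ℝ)) : ℝ × ℝ)).contDiff.comp h

lemma mvt_pow (f : ℝ → ℝ) (a K : ℝ) (n : ℕ) (hK : 0 ≤ K)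
    (hf : Differentiable ℝ f) (h0 : f a = 0)
    (hb : ∀ x, |x - a| ≤ 1 → |deriv f x| ≤ K * |x - a| ^ n) :
    ∀ x, |x - a| ≤ 1 → |f x| ≤ K * |x - a| ^ (n + 1) := by
  intro x hx
  have hseg : ∀ y ∈ segment ℝ a x, |y - a| ≤ |x - a| := by
    intro y hy
    obtain ⟨s, r, hs, hr, hsr, rfl⟩ := hy
    have h1 : s • a + r • x - a = r * (x - a) := by
      have : s = 1 - r := by linarith
      simp [this, smul_eq_mul]; ring
    rw [h1, abs_mul]
    have h2 : |r| = r := abs_of_nonneg hr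
    nlinarith [abs_nonneg (x - a)]
  have key := (convex_segment a x).norm_image_sub_le_of_norm_deriv_le
    (fun y _ => hf y)
    (fun y hy => by
      have h1 : |y - a| ≤ |x - a| := hseg y hy
      have h2 : |y - a| ≤ 1 := h1.trans hx
      calc ‖deriv f y‖ ≤ K * |y - a| ^ n := hb y h2
        _ ≤ K * |x - a| ^ n :=
            mul_le_mul_of_nonneg_left (pow_le_pow_left₀ (abs_nonneg _) h1 n) hK)
    (left_mem_segment ℝ a x) (right_mem_segment ℝ a x)
  rw [h0, sub_zero] at key
  calc |f x| ≤ K * |x - a| ^ n * ‖x - a‖ := key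
    _ = K * |x - a| ^ (n + 1) := by rw [Real.norm_eq_abs]; ring

lemma vanish_bound (f : ℝ → ℝ) (a : ℝ) (hf : ContDiff ℝ (⊤ : ℕ∞) f) (n : ℕ)
    (hvan : ∀ k < n, deriv^[k] f a = 0) :
    ∃ C, 0 < C ∧ ∀ x, |x - a| ≤ 1 → |f x| ≤ C * |x - a| ^ n := by
  have hco : Continuous (deriv^[n] f) := (hf.iterate_deriv n).continuous
  obtain ⟨M, hM⟩ := (isCompact_Icc (a := a - 1) (b := a + 1)).exists_bound_of_continuousOn
    (hco.continuousOn)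
  set C := max M 0 + 1 with hC
  have hCpos : 0 < C := by positivity
  refine ⟨C, hCpos, ?_⟩
  have key : ∀ j, j ≤ n → ∀ x, |x - a| ≤ 1 → |deriv^[n - j] f x| ≤ C * |x - a| ^ j := by
    intro j
    induction j with
    | zero =>
      intro _ x hx
      simp only [pow_zero, mul_one, Nat.sub_zero]
      have hxI : x ∈ Icc (a - 1) (a + 1) := by
        constructor <;> [linarith [abs_le.mp hx |>.1]; linarith [abs_le.mp hx |>.2]]
      calc |deriv^[n] f x| ≤ M := hM x hxI
        _ ≤ C := by simp [hC]; linarith [le_max_left M 0]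
    | succ j ih =>
      intro hj x hx
      have hj' : j ≤ n := Nat.le_of_succ_le hj
      have hdiff : Differentiable ℝ (deriv^[n - (j+1)] f) :=
        (hf.iterate_deriv (n - (j+1))).differentiable (by simp)
      have h0 : deriv^[n - (j+1)] f a = 0 := hvan _ (by omega)
      have hderiv : deriv (deriv^[n - (j+1)] f) = deriv^[n - j] f := by
        funext y; rw [show n - j = n - (j+1) + 1 by omega, Function.iterate_succ_apply' deriv]
      have := mvt_pow (deriv^[n - (j+1)] f) a C j hCpos.le hdiff h0
        (fun y hy => by rw [hderiv]; exact ih hj' y hy)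
      exact this x hx
  have := key n le_rfl
  simpa using this

lemma aux1 (c : ℝ → ℝ) (c₀ : ℝ) (hc₀ : 0 < c₀) (hc : ContDiff ℝ (⊤ : ℕ∞) c)
    (hclb : ∀ v, c₀ ≤ c v)
    (u w z p q x t : ℝ × ℝ → ℝ)
    (hsmooth : Smooth7 u w z p q x t)
    (hsys : SolvesSystem c u w z p q x t)
    (X₀ Y₀ : ℝ) (hwπ : w (X₀, Y₀) = Real.pi) :
    ∃ C, 0 < C ∧ ∀ X Y : ℝ, |X - X₀| ≤ 1 → |Y - Y₀| ≤ 1 →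
      |(x (X, Y) - x (X₀, Y₀)) - c (u (X₀, Y₀)) * (t (X, Y) - t (X₀, Y₀))
        + (1 + Real.cos (z (X₀, Y₀))) * q (X₀, Y₀) / 2 * (Y - Y₀)|
      ≤ C * (|X - X₀| ^ 4 + |Y - Y₀| ^ 2 + |X - X₀| ^ 2 * |Y - Y₀|) := by
  obtain ⟨hu, hw, hz, hp, hq, hx, ht⟩ := hsmooth
  have hone : ((⊤ : ℕ∞) : WithTop ℕ∞) ≠ 0 := by simp
  have hdu := hu.differentiable hone
  have hdw := hw.differentiable hone
  have hdz := hz.differentiable hone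
  have hdp := hp.differentiable hone
  have hdq := hq.differentiable hone
  have hdx := hx.differentiable hone
  have hdt := ht.differentiable hone
  have hdc := hc.differentiable hone
  have hcne : ∀ v, c v ≠ 0 := fun v => ne_of_gt (lt_of_lt_of_le hc₀ (hclb v))
  set cu₀ := c (u (X₀, Y₀)) with hcu₀
  set k := (1 + Real.cos (z (X₀, Y₀))) * q (X₀, Y₀) / 2 with hk
  have hι : ContDiff ℝ (⊤ : ℕ∞) (fun X : ℝ => (X, Y₀)) := contDiff_id.prodMk contDiff_const
  have hdXu0 : dX u (X₀, Y₀) = 0 := by rw [(hsys (X₀, Y₀)).1, hwπ]; simp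
  -- the four main one-variable players
  set A : ℝ → ℝ := fun X => (1 + Real.cos (w (X, Y₀))) * p (X, Y₀) / 4 with hA
  set B : ℝ → ℝ := fun X => 1 - cu₀ / c (u (X, Y₀)) with hB
  set A₁ : ℝ → ℝ := fun X =>
    (-Real.sin (w (X, Y₀)) * dX w (X, Y₀) * p (X, Y₀)
      + (1 + Real.cos (w (X, Y₀))) * dX p (X, Y₀)) / 4 with hA₁
  set B₁ : ℝ → ℝ := fun X =>
    cu₀ * (deriv c (u (X, Y₀)) * dX u (X, Y₀)) / (c (u (X, Y₀))) ^ 2 with hB₁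
  have hAd : ∀ X, HasDerivAt A (A₁ X) X := by
    intro X
    have hW := hasDerivAt_sliceX w hdw X Y₀
    have hP := hasDerivAt_sliceX p hdp X Y₀
    have h2 : HasDerivAt A _ X := ((hW.cos.const_add 1).mul hP).div_const 4
    convert h2 using 1
    try simp only [hA₁]
    try ring
  have hBd : ∀ X, HasDerivAt B (B₁ X) X := by
    intro X
    have hU := hasDerivAt_sliceX u hdu X Y₀
    have hcU : HasDerivAt (fun s => c (u (s, Y₀))) (deriv c (u (X, Y₀)) * dX u (X, Y₀)) X := by
      simpa [Function.comp_def] using ((hdc (u (X, Y₀))).hasDerivAt.comp X hU)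
    have h2 : HasDerivAt B _ X := ((hasDerivAt_const X cu₀).div hcU (hcne _)).const_sub 1
    convert h2 using 1
    simp only [hB₁]
    field_simp
    ring
  set g : ℝ → ℝ := fun X => (x (X, Y₀) - x (X₀, Y₀)) - cu₀ * (t (X, Y₀) - t (X₀, Y₀)) with hg
  have hgC : ContDiff ℝ (⊤ : ℕ∞) g :=
    ((hx.comp hι).sub contDiff_const).sub (contDiff_const.mul ((ht.comp hι).sub contDiff_const))
  have hgd : ∀ X, HasDerivAt g (A X * B X) X := by
    intro X
    have hxs := hasDerivAt_sliceX x hdx X Y₀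
    have hts := hasDerivAt_sliceX t hdt X Y₀
    have h1 : HasDerivAt g (dX x (X, Y₀) - cu₀ * dX t (X, Y₀)) X :=
      (hxs.sub_const _).sub ((hts.sub_const _).const_mul cu₀)
    convert h1 using 1
    rw [(hsys (X, Y₀)).2.2.2.2.2.2.1, (hsys (X, Y₀)).2.2.2.2.2.2.2.2.1]
    simp only [hA, hB]
    field_simp
  have hA0 : A X₀ = 0 := by simp [hA, hwπ]
  have hB0 : B X₀ = 0 := by
    simp only [hB, ← hcu₀]
    rw [div_self (by rw [hcu₀]; exact hcne _)]
    ring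
  have hA₁0 : A₁ X₀ = 0 := by simp [hA₁, hwπ]
  have hB₁0 : B₁ X₀ = 0 := by simp [hB₁, hdXu0]
  have hg0 : g X₀ = 0 := by simp [hg]
  have hderiv1 : deriv g = fun X => A X * B X := funext fun X => (hgd X).deriv
  have hderiv2 : deriv (deriv g) = fun X => A₁ X * B X + A X * B₁ X := by
    rw [hderiv1]; exact funext fun X => ((hAd X).mul (hBd X)).deriv
  have hg1 : deriv g X₀ = 0 := by rw [hderiv1]; simp [hA0]
  have hg2 : deriv (deriv g) X₀ = 0 := by rw [hderiv2]; simp [hA0, hA₁0]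
  have hA₁diff : DifferentiableAt ℝ A₁ X₀ := by
    have h1 : ContDiff ℝ (⊤ : ℕ∞) A₁ := by
      apply ContDiff.div_const
      exact (((hw.comp hι).sin.neg.mul ((contDiff_dX w hw).comp hι)).mul (hp.comp hι)).add
        ((contDiff_const.add (hw.comp hι).cos).mul ((contDiff_dX p hp).comp hι))
    exact (h1.differentiable hone).differentiableAt
  have hdc' : ContDiff ℝ (⊤ : ℕ∞) (deriv c) := (contDiff_infty_iff_deriv.mp hc).2
  have hB₁diff : DifferentiableAt ℝ B₁ X₀ := by
    have hnum : ContDiff ℝ (⊤ : ℕ∞) (fun X => cu₀ * (deriv c (u (X, Y₀)) * dX u (X, Y₀))) :=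
      contDiff_const.mul (((hdc'.comp hu).comp hι).mul ((contDiff_dX u hu).comp hι))
    have hden : ContDiff ℝ (⊤ : ℕ∞) (fun X => (c (u (X, Y₀))) ^ 2) :=
      ((hc.comp hu).comp hι).pow 2
    exact ((hnum.differentiable hone).differentiableAt).div
      ((hden.differentiable hone).differentiableAt) (pow_ne_zero 2 (hcne _))
  have hg3 : deriv (deriv (deriv g)) X₀ = 0 := by
    rw [hderiv2]
    have h1 : HasDerivAt (fun X => A₁ X * B X + A X * B₁ X)
        (deriv A₁ X₀ * B X₀ + A₁ X₀ * B₁ X₀ + (A₁ X₀ * B₁ X₀ + A X₀ * deriv B₁ X₀)) X₀ :=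
      (hA₁diff.hasDerivAt.mul (hBd X₀)).add ((hAd X₀).mul hB₁diff.hasDerivAt)
    rw [h1.deriv, hA0, hB0, hA₁0]; ring
  obtain ⟨C₁, hC₁, hC₁b⟩ := vanish_bound g X₀ hgC 4 (by
    intro j hj
    interval_cases j
    · simpa using hg0
    · simpa using hg1
    · rw [show (2 : ℕ) = 1 + 1 from rfl, Function.iterate_succ_apply', Function.iterate_one]
      exact hg2
    · rw [show (3 : ℕ) = 2 + 1 from rfl, Function.iterate_succ_apply',
        show (2 : ℕ) = 1 + 1 from rfl, Function.iterate_succ_apply', Function.iterate_one]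
      exact hg3)
  -- the Y-derivative player
  set h : ℝ → ℝ := fun X => dY x (X, Y₀) - cu₀ * dY t (X, Y₀) + k with hh
  have hhC : ContDiff ℝ (⊤ : ℕ∞) h :=
    (((contDiff_dY x hx).comp hι).sub
      (contDiff_const.mul ((contDiff_dY t ht).comp hι))).add contDiff_const
  have hh0 : h X₀ = 0 := by
    simp only [hh]
    rw [(hsys (X₀, Y₀)).2.2.2.2.2.2.2.1, (hsys (X₀, Y₀)).2.2.2.2.2.2.2.2.2, hk, ← hcu₀]
    have hcu₀ne : cu₀ ≠ 0 := by rw [hcu₀]; exact hcne _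
    field_simp
    ring
  have hhexp : h = fun X => -((1 + Real.cos (z (X, Y₀))) * q (X, Y₀)) / 4
      - cu₀ * ((1 + Real.cos (z (X, Y₀))) * q (X, Y₀) / (4 * c (u (X, Y₀)))) + k := by
    funext X
    simp only [hh]
    rw [(hsys (X, Y₀)).2.2.2.2.2.2.2.1, (hsys (X, Y₀)).2.2.2.2.2.2.2.2.2]
  have hh1 : deriv h X₀ = 0 := by
    rw [hhexp]
    have hZ := hasDerivAt_sliceX z hdz X₀ Y₀
    have hQ := hasDerivAt_sliceX q hdq X₀ Y₀
    have hU := hasDerivAt_sliceX u hdu X₀ Y₀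
    have hcU : HasDerivAt (fun s => c (u (s, Y₀))) (deriv c (u (X₀, Y₀)) * dX u (X₀, Y₀)) X₀ := by
      simpa [Function.comp_def] using ((hdc (u (X₀, Y₀))).hasDerivAt.comp X₀ hU)
    have hT1 : HasDerivAt (fun X => (1 + Real.cos (z (X, Y₀))) * q (X, Y₀))
        ((-Real.sin (z (X₀, Y₀)) * dX z (X₀, Y₀)) * q (X₀, Y₀)
          + (1 + Real.cos (z (X₀, Y₀))) * dX q (X₀, Y₀)) X₀ :=
      (hZ.cos.const_add 1).mul hQ
    have hT2 : HasDerivAt (fun X => 4 * c (u (X, Y₀)))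
        (4 * (deriv c (u (X₀, Y₀)) * dX u (X₀, Y₀))) X₀ := hcU.const_mul 4
    have hT2ne : (4 : ℝ) * c (u (X₀, Y₀)) ≠ 0 := by
      have := hcne (u (X₀, Y₀)); positivity
    have hfull : HasDerivAt (fun X => -((1 + Real.cos (z (X, Y₀))) * q (X, Y₀)) / 4
        - cu₀ * ((1 + Real.cos (z (X, Y₀))) * q (X, Y₀) / (4 * c (u (X, Y₀)))) + k) _ X₀ :=
      ((hT1.neg.div_const 4).sub ((hT1.div hT2 hT2ne).const_mul cu₀)).add_const k
    rw [hfull.deriv, (hsys (X₀, Y₀)).2.2.2.1, (hsys (X₀, Y₀)).2.2.2.2.2.1, hdXu0, hwπ]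
    simp only [Real.sin_pi, Real.cos_pi]
    field_simp
    ring
  obtain ⟨Ch, hCh, hChb⟩ := vanish_bound h X₀ hhC 2 (by
    intro j hj
    interval_cases j
    · simpa using hh0
    · simpa using hh1)
  -- vertical estimate
  set η : ℝ × ℝ → ℝ := fun P => dY x P - cu₀ * dY t P + k with hη
  have hηC : ContDiff ℝ (⊤ : ℕ∞) η :=
    ((contDiff_dY x hx).sub (contDiff_const.mul (contDiff_dY t ht))).add contDiff_const
  have hηd : Differentiable ℝ η := hηC.differentiable hone
  obtain ⟨M, hM⟩ := ((isCompact_Icc (a := X₀ - 1) (b := X₀ + 1)).prod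
    (isCompact_Icc (a := Y₀ - 1) (b := Y₀ + 1))).exists_bound_of_continuousOn
    ((contDiff_dY η hηC).continuous.continuousOn)
  set M' := max M 0 + 1 with hM'
  have hM'pos : 0 < M' := by positivity
  have hMb : ∀ X Y : ℝ, |X - X₀| ≤ 1 → |Y - Y₀| ≤ 1 → |dY η (X, Y)| ≤ M' := by
    intro X Y hX hY
    have hmem : (X, Y) ∈ Icc (X₀ - 1) (X₀ + 1) ×ˢ Icc (Y₀ - 1) (Y₀ + 1) := by
      refine ⟨⟨?_, ?_⟩, ⟨?_, ?_⟩⟩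
      · linarith [(abs_le.mp hX).1]
      · linarith [(abs_le.mp hX).2]
      · linarith [(abs_le.mp hY).1]
      · linarith [(abs_le.mp hY).2]
    calc |dY η (X, Y)| ≤ M := hM _ hmem
      _ ≤ M' := by rw [hM']; have := le_max_left M (0:ℝ); linarith
  have hvert : ∀ X Y : ℝ, |X - X₀| ≤ 1 → |Y - Y₀| ≤ 1 →
      |((x (X, Y) - x (X₀, Y₀)) - cu₀ * (t (X, Y) - t (X₀, Y₀)) + k * (Y - Y₀))
        - g X - h X * (Y - Y₀)| ≤ M' * |Y - Y₀| ^ 2 := by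
    intro X Y hX hY
    set ψ : ℝ → ℝ := fun s => ((x (X, s) - x (X₀, Y₀)) - cu₀ * (t (X, s) - t (X₀, Y₀))
      + k * (s - Y₀)) - g X - h X * (s - Y₀) with hψ
    have hψd : ∀ s, HasDerivAt ψ (η (X, s) - η (X, Y₀)) s := by
      intro s
      have hxs := hasDerivAt_sliceY x hdx X s
      have hts := hasDerivAt_sliceY t hdt X s
      have hlin : HasDerivAt (fun s : ℝ => k * (s - Y₀)) k s := by
        simpa using ((hasDerivAt_id s).sub_const Y₀).const_mul k
      have hlin2 : HasDerivAt (fun s : ℝ => h X * (s - Y₀)) (h X) s := by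
        simpa using ((hasDerivAt_id s).sub_const Y₀).const_mul (h X)
      have h1 : HasDerivAt ψ _ s := ((((hxs.sub_const (x (X₀, Y₀))).sub
        ((hts.sub_const (t (X₀, Y₀))).const_mul cu₀)).add hlin).sub_const (g X)).sub hlin2
      convert h1 using 1
      try simp only [hη, hh]
      try ring
    have hinner : ∀ s, |s - Y₀| ≤ 1 → |η (X, s) - η (X, Y₀)| ≤ M' * |s - Y₀| := by
      have hstep := mvt_pow (fun s => η (X, s) - η (X, Y₀)) Y₀ M' 0 hM'pos.le
        (fun s => ((hasDerivAt_sliceY η hηd X s).sub_const _).differentiableAt)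
        (by simp)
        (fun s hs => by
          rw [((hasDerivAt_sliceY η hηd X s).sub_const _).deriv]
          simpa using hMb X s hX hs)
      intro s hs
      simpa using hstep s hs
    have hψb := mvt_pow ψ Y₀ M' 1 hM'pos.le (fun s => (hψd s).differentiableAt)
      (by simp only [hψ]; try ring)
      (fun s hs => by
        rw [(hψd s).deriv]
        simpa using hinner s hs)
    simpa [hψ] using hψb Y hY
  -- combine
  refine ⟨C₁ + Ch + M', by positivity, ?_⟩
  intro X Y hX hY
  have e1 := hC₁b X hX
  have e2 := hChb X hX
  have e3 := hvert X Y hX hY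
  have t3 : |h X * (Y - Y₀)| ≤ Ch * |X - X₀| ^ 2 * |Y - Y₀| := by
    rw [abs_mul]
    exact mul_le_mul_of_nonneg_right e2 (abs_nonneg _)
  set E := x (X, Y) - x (X₀, Y₀) - cu₀ * (t (X, Y) - t (X₀, Y₀)) + k * (Y - Y₀) with hE
  have key : |E| ≤ |E - g X - h X * (Y - Y₀)| + |g X| + |h X * (Y - Y₀)| := by
    have h1 := abs_add_le (E - g X - h X * (Y - Y₀) + g X) (h X * (Y - Y₀))
    have h2 := abs_add_le (E - g X - h X * (Y - Y₀)) (g X)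
    calc |E| = |E - g X - h X * (Y - Y₀) + g X + h X * (Y - Y₀)| := by congr 1; ring
      _ ≤ |E - g X - h X * (Y - Y₀) + g X| + |h X * (Y - Y₀)| := h1
      _ ≤ |E - g X - h X * (Y - Y₀)| + |g X| + |h X * (Y - Y₀)| := by linarith
  have ha : (0:ℝ) ≤ |X - X₀| ^ 4 := by positivity
  have hb : (0:ℝ) ≤ |Y - Y₀| ^ 2 := by positivity
  have hd : (0:ℝ) ≤ |X - X₀| ^ 2 * |Y - Y₀| := by positivity
  have l1 : 0 ≤ C₁ * (|Y - Y₀| ^ 2) := mul_nonneg hC₁.le hb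
  have l2 : 0 ≤ C₁ * (|X - X₀| ^ 2 * |Y - Y₀|) := mul_nonneg hC₁.le hd
  have l3 : 0 ≤ Ch * (|X - X₀| ^ 4) := mul_nonneg hCh.le ha
  have l4 : 0 ≤ Ch * (|Y - Y₀| ^ 2) := mul_nonneg hCh.le hb
  have l5 : 0 ≤ M' * (|X - X₀| ^ 4) := mul_nonneg hM'pos.le ha
  have l6 : 0 ≤ M' * (|X - X₀| ^ 2 * |Y - Y₀|) := mul_nonneg hM'pos.le hd
  calc |E| ≤ |E - g X - h X * (Y - Y₀)| + |g X| + |h X * (Y - Y₀)| := key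
    _ ≤ M' * |Y - Y₀| ^ 2 + C₁ * |X - X₀| ^ 4 + Ch * |X - X₀| ^ 2 * |Y - Y₀| := by linarith
    _ ≤ (C₁ + Ch + M') * (|X - X₀| ^ 4 + |Y - Y₀| ^ 2 + |X - X₀| ^ 2 * |Y - Y₀|) := by
        nlinarith [l1, l2, l3, l4, l5, l6]

lemma aux2 (c : ℝ → ℝ) (c₀ : ℝ) (hc₀ : 0 < c₀) (hc : ContDiff ℝ (⊤ : ℕ∞) c)
    (hclb : ∀ v, c₀ ≤ c v)
    (u w z p q x t : ℝ × ℝ → ℝ)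
    (hsmooth : Smooth7 u w z p q x t)
    (hsys : SolvesSystem c u w z p q x t)
    (X₀ Y₀ : ℝ) (hwπ : w (X₀, Y₀) = Real.pi) :
    ∃ C, 0 < C ∧ ∀ X Y : ℝ, |X - X₀| ≤ 1 → |Y - Y₀| ≤ 1 →
      |(x (X, Y) - x (X₀, Y₀)) + c (u (X₀, Y₀)) * (t (X, Y) - t (X₀, Y₀))
        - dX w (X₀, Y₀) ^ 2 * p (X₀, Y₀) / 12 * (X - X₀) ^ 3|
      ≤ C * (|X - X₀| ^ 4 + |Y - Y₀| ^ 2 + |X - X₀| ^ 2 * |Y - Y₀|) := by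
  obtain ⟨hu, hw, hz, hp, hq, hx, ht⟩ := hsmooth
  have hone : ((⊤ : ℕ∞) : WithTop ℕ∞) ≠ 0 := by simp
  have hdu := hu.differentiable hone
  have hdw := hw.differentiable hone
  have hdz := hz.differentiable hone
  have hdp := hp.differentiable hone
  have hdq := hq.differentiable hone
  have hdx := hx.differentiable hone
  have hdt := ht.differentiable hone
  have hdc := hc.differentiable hone
  have hcne : ∀ v, c v ≠ 0 := fun v => ne_of_gt (lt_of_lt_of_le hc₀ (hclb v))
  set cu₀ := c (u (X₀, Y₀)) with hcu₀
  have hcu₀ne : cu₀ ≠ 0 := by rw [hcu₀]; exact hcne _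
  set a := dX w (X₀, Y₀) ^ 2 * p (X₀, Y₀) / 12 with ha
  have hι : ContDiff ℝ (⊤ : ℕ∞) (fun X : ℝ => (X, Y₀)) := contDiff_id.prodMk contDiff_const
  have hdXu0 : dX u (X₀, Y₀) = 0 := by rw [(hsys (X₀, Y₀)).1, hwπ]; simp
  set A : ℝ → ℝ := fun X => (1 + Real.cos (w (X, Y₀))) * p (X, Y₀) / 4 with hA
  set B₂ : ℝ → ℝ := fun X => 1 + cu₀ / c (u (X, Y₀)) with hB₂
  set A₁ : ℝ → ℝ := fun X =>
    (-Real.sin (w (X, Y₀)) * dX w (X, Y₀) * p (X, Y₀)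
      + (1 + Real.cos (w (X, Y₀))) * dX p (X, Y₀)) / 4 with hA₁
  set B₂₁ : ℝ → ℝ := fun X =>
    -(cu₀ * (deriv c (u (X, Y₀)) * dX u (X, Y₀))) / (c (u (X, Y₀))) ^ 2 with hB₂₁
  have hAd : ∀ X, HasDerivAt A (A₁ X) X := by
    intro X
    have hW := hasDerivAt_sliceX w hdw X Y₀
    have hP := hasDerivAt_sliceX p hdp X Y₀
    have h2 : HasDerivAt A _ X := ((hW.cos.const_add 1).mul hP).div_const 4
    convert h2 using 1
    try simp only [hA₁]
    try ring
  have hB₂d : ∀ X, HasDerivAt B₂ (B₂₁ X) X := by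
    intro X
    have hU := hasDerivAt_sliceX u hdu X Y₀
    have hcU : HasDerivAt (fun s => c (u (s, Y₀))) (deriv c (u (X, Y₀)) * dX u (X, Y₀)) X := by
      simpa [Function.comp_def] using ((hdc (u (X, Y₀))).hasDerivAt.comp X hU)
    have h2 : HasDerivAt B₂ _ X := ((hasDerivAt_const X cu₀).div hcU (hcne _)).const_add 1
    convert h2 using 1
    simp only [hB₂₁]
    field_simp
    ring
  set g : ℝ → ℝ := fun X => (x (X, Y₀) - x (X₀, Y₀)) + cu₀ * (t (X, Y₀) - t (X₀, Y₀))
    - a * (X - X₀) ^ 3 with hg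
  have hgC : ContDiff ℝ (⊤ : ℕ∞) g := by
    refine ContDiff.sub ?_ ?_
    · exact ((hx.comp hι).sub contDiff_const).add
        (contDiff_const.mul ((ht.comp hι).sub contDiff_const))
    · exact contDiff_const.mul ((contDiff_id.sub contDiff_const).pow 3)
  have hgd : ∀ X, HasDerivAt g (A X * B₂ X - 3 * a * (X - X₀) ^ 2) X := by
    intro X
    have hxs := hasDerivAt_sliceX x hdx X Y₀
    have hts := hasDerivAt_sliceX t hdt X Y₀
    have hcube : HasDerivAt (fun X : ℝ => a * (X - X₀) ^ 3)
        (a * (3 * (X - X₀) ^ 2 * 1)) X := by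
      have : HasDerivAt (fun X : ℝ => a * (X - X₀) ^ 3) _ X := (((hasDerivAt_id X).sub_const X₀).pow 3).const_mul a
      convert this using 1
      try norm_num
    have h1 : HasDerivAt g (dX x (X, Y₀) + cu₀ * dX t (X, Y₀) - a * (3 * (X - X₀) ^ 2 * 1)) X :=
      ((hxs.sub_const _).add ((hts.sub_const _).const_mul cu₀)).sub hcube
    convert h1 using 1
    rw [(hsys (X, Y₀)).2.2.2.2.2.2.1, (hsys (X, Y₀)).2.2.2.2.2.2.2.2.1]
    simp only [hA, hB₂]
    field_simp
  have hA0 : A X₀ = 0 := by simp [hA, hwπ]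
  have hB₂0 : B₂ X₀ = 2 := by
    simp only [hB₂, ← hcu₀]
    rw [div_self hcu₀ne]
    ring
  have hA₁0 : A₁ X₀ = 0 := by simp [hA₁, hwπ]
  have hB₂₁0 : B₂₁ X₀ = 0 := by simp [hB₂₁, hdXu0]
  have hg0 : g X₀ = 0 := by simp [hg]
  have hderiv1 : deriv g = fun X => A X * B₂ X - 3 * a * (X - X₀) ^ 2 :=
    funext fun X => (hgd X).deriv
  set D2 : ℝ → ℝ := fun X => A₁ X * B₂ X + A X * B₂₁ X - 6 * a * (X - X₀) with hD2
  have hD2d : ∀ X, HasDerivAt (fun X => A X * B₂ X - 3 * a * (X - X₀) ^ 2) (D2 X) X := by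
    intro X
    have hquad : HasDerivAt (fun X : ℝ => 3 * a * (X - X₀) ^ 2)
        (3 * a * (2 * (X - X₀) ^ 1 * 1)) X :=
      (((hasDerivAt_id X).sub_const X₀).pow 2).const_mul (3 * a)
    have h1 : HasDerivAt (fun X => A X * B₂ X - 3 * a * (X - X₀) ^ 2) _ X := ((hAd X).mul (hB₂d X)).sub hquad
    convert h1 using 1
    simp only [hD2]
    ring
  have hderiv2 : deriv (deriv g) = D2 := by
    rw [hderiv1]; exact funext fun X => (hD2d X).deriv
  have hg1 : deriv g X₀ = 0 := by rw [hderiv1]; simp [hA0]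
  have hg2 : deriv (deriv g) X₀ = 0 := by
    rw [hderiv2]; simp [hD2, hA0, hA₁0]
  -- third derivative
  have hA₁deriv : HasDerivAt A₁ (dX w (X₀, Y₀) ^ 2 * p (X₀, Y₀) / 4) X₀ := by
    have hW := hasDerivAt_sliceX w hdw X₀ Y₀
    have hP := hasDerivAt_sliceX p hdp X₀ Y₀
    have hWXc : ContDiff ℝ (⊤ : ℕ∞) (fun X : ℝ => dX w (X, Y₀)) := (contDiff_dX w hw).comp hι
    have hPXc : ContDiff ℝ (⊤ : ℕ∞) (fun X : ℝ => dX p (X, Y₀)) := (contDiff_dX p hp).comp hι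
    have hWX : HasDerivAt (fun X : ℝ => dX w (X, Y₀))
        (deriv (fun X : ℝ => dX w (X, Y₀)) X₀) X₀ :=
      ((hWXc.differentiable hone) X₀).hasDerivAt
    have hPX : HasDerivAt (fun X : ℝ => dX p (X, Y₀))
        (deriv (fun X : ℝ => dX p (X, Y₀)) X₀) X₀ :=
      ((hPXc.differentiable hone) X₀).hasDerivAt
    have term1 := (hW.sin.neg.mul hWX).mul hP
    have term2 := (hW.cos.const_add 1).mul hPX
    have total : HasDerivAt A₁ _ X₀ := (term1.add term2).div_const 4
    convert total using 1
    rw [hwπ]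
    simp only [Pi.mul_apply, Pi.neg_apply, hwπ, Real.sin_pi, Real.cos_pi]
    ring
  have hdc' : ContDiff ℝ (⊤ : ℕ∞) (deriv c) := (contDiff_infty_iff_deriv.mp hc).2
  have hB₂₁diff : DifferentiableAt ℝ B₂₁ X₀ := by
    have hnum : ContDiff ℝ (⊤ : ℕ∞) (fun X => -(cu₀ * (deriv c (u (X, Y₀)) * dX u (X, Y₀)))) :=
      (contDiff_const.mul (((hdc'.comp hu).comp hι).mul ((contDiff_dX u hu).comp hι))).neg
    have hden : ContDiff ℝ (⊤ : ℕ∞) (fun X => (c (u (X, Y₀))) ^ 2) :=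
      ((hc.comp hu).comp hι).pow 2
    exact ((hnum.differentiable hone).differentiableAt).div
      ((hden.differentiable hone).differentiableAt) (pow_ne_zero 2 (hcne _))
  have hg3 : deriv (deriv (deriv g)) X₀ = 0 := by
    rw [hderiv2]
    have hlin6 : HasDerivAt (fun X : ℝ => 6 * a * (X - X₀)) (6 * a) X₀ := by
      simpa using ((hasDerivAt_id X₀).sub_const X₀).const_mul (6 * a)
    have h1 : HasDerivAt D2
        (dX w (X₀, Y₀) ^ 2 * p (X₀, Y₀) / 4 * B₂ X₀ + A₁ X₀ * B₂₁ X₀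
          + (A₁ X₀ * B₂₁ X₀ + A X₀ * deriv B₂₁ X₀) - 6 * a) X₀ :=
      ((hA₁deriv.mul (hB₂d X₀)).add ((hAd X₀).mul hB₂₁diff.hasDerivAt)).sub hlin6
    rw [h1.deriv, hB₂0, hA₁0, hA0, ha]
    ring
  obtain ⟨C₁, hC₁, hC₁b⟩ := vanish_bound g X₀ hgC 4 (by
    intro j hj
    interval_cases j
    · simpa using hg0
    · simpa using hg1
    · rw [show (2 : ℕ) = 1 + 1 from rfl, Function.iterate_succ_apply', Function.iterate_one]
      exact hg2
    · rw [show (3 : ℕ) = 2 + 1 from rfl, Function.iterate_succ_apply',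
        show (2 : ℕ) = 1 + 1 from rfl, Function.iterate_succ_apply', Function.iterate_one]
      exact hg3)
  -- the Y-derivative player
  set h : ℝ → ℝ := fun X => dY x (X, Y₀) + cu₀ * dY t (X, Y₀) with hh
  have hhC : ContDiff ℝ (⊤ : ℕ∞) h :=
    ((contDiff_dY x hx).comp hι).add (contDiff_const.mul ((contDiff_dY t ht).comp hι))
  have hh0 : h X₀ = 0 := by
    simp only [hh]
    rw [(hsys (X₀, Y₀)).2.2.2.2.2.2.2.1, (hsys (X₀, Y₀)).2.2.2.2.2.2.2.2.2, ← hcu₀]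
    field_simp
    ring
  have hhexp : h = fun X => -((1 + Real.cos (z (X, Y₀))) * q (X, Y₀)) / 4
      + cu₀ * ((1 + Real.cos (z (X, Y₀))) * q (X, Y₀) / (4 * c (u (X, Y₀)))) := by
    funext X
    simp only [hh]
    rw [(hsys (X, Y₀)).2.2.2.2.2.2.2.1, (hsys (X, Y₀)).2.2.2.2.2.2.2.2.2]
  have hh1 : deriv h X₀ = 0 := by
    rw [hhexp]
    have hZ := hasDerivAt_sliceX z hdz X₀ Y₀
    have hQ := hasDerivAt_sliceX q hdq X₀ Y₀
    have hU := hasDerivAt_sliceX u hdu X₀ Y₀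
    have hcU : HasDerivAt (fun s => c (u (s, Y₀))) (deriv c (u (X₀, Y₀)) * dX u (X₀, Y₀)) X₀ := by
      simpa [Function.comp_def] using ((hdc (u (X₀, Y₀))).hasDerivAt.comp X₀ hU)
    have hT1 : HasDerivAt (fun X => (1 + Real.cos (z (X, Y₀))) * q (X, Y₀))
        ((-Real.sin (z (X₀, Y₀)) * dX z (X₀, Y₀)) * q (X₀, Y₀)
          + (1 + Real.cos (z (X₀, Y₀))) * dX q (X₀, Y₀)) X₀ :=
      (hZ.cos.const_add 1).mul hQ
    have hT2 : HasDerivAt (fun X => 4 * c (u (X, Y₀)))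
        (4 * (deriv c (u (X₀, Y₀)) * dX u (X₀, Y₀))) X₀ := hcU.const_mul 4
    have hT2ne : (4 : ℝ) * c (u (X₀, Y₀)) ≠ 0 := by
      have := hcne (u (X₀, Y₀)); positivity
    have hfull : HasDerivAt (fun X => -((1 + Real.cos (z (X, Y₀))) * q (X, Y₀)) / 4
        + cu₀ * ((1 + Real.cos (z (X, Y₀))) * q (X, Y₀) / (4 * c (u (X, Y₀))))) _ X₀ :=
      (hT1.neg.div_const 4).add ((hT1.div hT2 hT2ne).const_mul cu₀)
    rw [hfull.deriv, (hsys (X₀, Y₀)).2.2.2.1, (hsys (X₀, Y₀)).2.2.2.2.2.1, hdXu0, hwπ]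
    simp only [Real.sin_pi, Real.cos_pi]
    field_simp
    ring
  obtain ⟨Ch, hCh, hChb⟩ := vanish_bound h X₀ hhC 2 (by
    intro j hj
    interval_cases j
    · simpa using hh0
    · simpa using hh1)
  -- vertical estimate
  set η : ℝ × ℝ → ℝ := fun P => dY x P + cu₀ * dY t P with hη
  have hηC : ContDiff ℝ (⊤ : ℕ∞) η :=
    (contDiff_dY x hx).add (contDiff_const.mul (contDiff_dY t ht))
  have hηd : Differentiable ℝ η := hηC.differentiable hone
  obtain ⟨M, hM⟩ := ((isCompact_Icc (a := X₀ - 1) (b := X₀ + 1)).prod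
    (isCompact_Icc (a := Y₀ - 1) (b := Y₀ + 1))).exists_bound_of_continuousOn
    ((contDiff_dY η hηC).continuous.continuousOn)
  set M' := max M 0 + 1 with hM'
  have hM'pos : 0 < M' := by positivity
  have hMb : ∀ X Y : ℝ, |X - X₀| ≤ 1 → |Y - Y₀| ≤ 1 → |dY η (X, Y)| ≤ M' := by
    intro X Y hX hY
    have hmem : (X, Y) ∈ Icc (X₀ - 1) (X₀ + 1) ×ˢ Icc (Y₀ - 1) (Y₀ + 1) := by
      refine ⟨⟨?_, ?_⟩, ⟨?_, ?_⟩⟩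
      · linarith [(abs_le.mp hX).1]
      · linarith [(abs_le.mp hX).2]
      · linarith [(abs_le.mp hY).1]
      · linarith [(abs_le.mp hY).2]
    calc |dY η (X, Y)| ≤ M := hM _ hmem
      _ ≤ M' := by rw [hM']; have := le_max_left M (0:ℝ); linarith
  have hvert : ∀ X Y : ℝ, |X - X₀| ≤ 1 → |Y - Y₀| ≤ 1 →
      |((x (X, Y) - x (X₀, Y₀)) + cu₀ * (t (X, Y) - t (X₀, Y₀)) - a * (X - X₀) ^ 3)
        - g X - h X * (Y - Y₀)| ≤ M' * |Y - Y₀| ^ 2 := by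
    intro X Y hX hY
    set ψ : ℝ → ℝ := fun s => ((x (X, s) - x (X₀, Y₀)) + cu₀ * (t (X, s) - t (X₀, Y₀))
      - a * (X - X₀) ^ 3) - g X - h X * (s - Y₀) with hψ
    have hψd : ∀ s, HasDerivAt ψ (η (X, s) - η (X, Y₀)) s := by
      intro s
      have hxs := hasDerivAt_sliceY x hdx X s
      have hts := hasDerivAt_sliceY t hdt X s
      have hlin2 : HasDerivAt (fun s : ℝ => h X * (s - Y₀)) (h X) s := by
        simpa using ((hasDerivAt_id s).sub_const Y₀).const_mul (h X)
      have h1 : HasDerivAt ψ _ s := (((((hxs.sub_const (x (X₀, Y₀))).add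
        ((hts.sub_const (t (X₀, Y₀))).const_mul cu₀)).sub_const
          (a * (X - X₀) ^ 3)).sub_const (g X)).sub hlin2)
      convert h1 using 1
      try simp only [hη, hh]
      try ring
    have hinner : ∀ s, |s - Y₀| ≤ 1 → |η (X, s) - η (X, Y₀)| ≤ M' * |s - Y₀| := by
      have hstep := mvt_pow (fun s => η (X, s) - η (X, Y₀)) Y₀ M' 0 hM'pos.le
        (fun s => ((hasDerivAt_sliceY η hηd X s).sub_const _).differentiableAt)
        (by simp)
        (fun s hs => by
          rw [((hasDerivAt_sliceY η hηd X s).sub_const _).deriv]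
          simpa using hMb X s hX hs)
      intro s hs
      simpa using hstep s hs
    have hψb := mvt_pow ψ Y₀ M' 1 hM'pos.le (fun s => (hψd s).differentiableAt)
      (by simp only [hψ, hg]; try ring)
      (fun s hs => by
        rw [(hψd s).deriv]
        simpa using hinner s hs)
    simpa [hψ] using hψb Y hY
  -- combine
  refine ⟨C₁ + Ch + M', by positivity, ?_⟩
  intro X Y hX hY
  have e1 := hC₁b X hX
  have e2 := hChb X hX
  have e3 := hvert X Y hX hY
  have t3 : |h X * (Y - Y₀)| ≤ Ch * |X - X₀| ^ 2 * |Y - Y₀| := by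
    rw [abs_mul]
    exact mul_le_mul_of_nonneg_right e2 (abs_nonneg _)
  set E := x (X, Y) - x (X₀, Y₀) + cu₀ * (t (X, Y) - t (X₀, Y₀)) - a * (X - X₀) ^ 3 with hE
  have key : |E| ≤ |E - g X - h X * (Y - Y₀)| + |g X| + |h X * (Y - Y₀)| := by
    have h1 := abs_add_le (E - g X - h X * (Y - Y₀) + g X) (h X * (Y - Y₀))
    have h2 := abs_add_le (E - g X - h X * (Y - Y₀)) (g X)
    calc |E| = |E - g X - h X * (Y - Y₀) + g X + h X * (Y - Y₀)| := by congr 1; ring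
      _ ≤ |E - g X - h X * (Y - Y₀) + g X| + |h X * (Y - Y₀)| := h1
      _ ≤ |E - g X - h X * (Y - Y₀)| + |g X| + |h X * (Y - Y₀)| := by linarith
  have ha4 : (0:ℝ) ≤ |X - X₀| ^ 4 := by positivity
  have hb : (0:ℝ) ≤ |Y - Y₀| ^ 2 := by positivity
  have hd : (0:ℝ) ≤ |X - X₀| ^ 2 * |Y - Y₀| := by positivity
  have l1 : 0 ≤ C₁ * (|Y - Y₀| ^ 2) := mul_nonneg hC₁.le hb
  have l2 : 0 ≤ C₁ * (|X - X₀| ^ 2 * |Y - Y₀|) := mul_nonneg hC₁.le hd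
  have l3 : 0 ≤ Ch * (|X - X₀| ^ 4) := mul_nonneg hCh.le ha4
  have l4 : 0 ≤ Ch * (|Y - Y₀| ^ 2) := mul_nonneg hCh.le hb
  have l5 : 0 ≤ M' * (|X - X₀| ^ 4) := mul_nonneg hM'pos.le ha4
  have l6 : 0 ≤ M' * (|X - X₀| ^ 2 * |Y - Y₀|) := mul_nonneg hM'pos.le hd
  calc |E| ≤ |E - g X - h X * (Y - Y₀)| + |g X| + |h X * (Y - Y₀)| := key
    _ ≤ M' * |Y - Y₀| ^ 2 + C₁ * |X - X₀| ^ 4 + Ch * |X - X₀| ^ 2 * |Y - Y₀| := by linarith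
    _ ≤ (C₁ + Ch + M') * (|X - X₀| ^ 4 + |Y - Y₀| ^ 2 + |X - X₀| ^ 2 * |Y - Y₀|) := by
        nlinarith [l1, l2, l3, l4, l5, l6]

/-- leading-order expansions of `x ∓ c(u₀) t` near a point where `w = π`. -/
theorem taylor_expansion_x_pm_ct
    (c : ℝ → ℝ) (c₀ : ℝ) (hc₀ : 0 < c₀) (hc : ContDiff ℝ (⊤ : ℕ∞) c)
    (hclb : ∀ v, c₀ ≤ c v)
    (u w z p q x t : ℝ × ℝ → ℝ)
    (hsmooth : Smooth7 u w z p q x t)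
    (hsys : SolvesSystem c u w z p q x t)
    (X₀ Y₀ : ℝ) (hwπ : w (X₀, Y₀) = Real.pi)
    (u₀ z₀ p₀ q₀ x₀ t₀ : ℝ)
    (hu₀ : u₀ = u (X₀, Y₀)) (hz₀ : z₀ = z (X₀, Y₀))
    (hp₀ : p₀ = p (X₀, Y₀)) (hq₀ : q₀ = q (X₀, Y₀))
    (hx₀ : x₀ = x (X₀, Y₀)) (ht₀ : t₀ = t (X₀, Y₀)) :
    ∃ C : ℝ, C > 0 ∧ ∃ N : Set (ℝ × ℝ), IsOpen N ∧ (X₀, Y₀) ∈ N ∧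
      ∀ P ∈ N,
        |(x P - x₀) - c u₀ * (t P - t₀)
            + (1 + Real.cos z₀) * q₀ / 2 * (P.2 - Y₀)|
          ≤ C * (|P.1 - X₀| ^ 4 + |P.2 - Y₀| ^ 2 + |P.1 - X₀| ^ 2 * |P.2 - Y₀|) ∧
        |(x P - x₀) + c u₀ * (t P - t₀)
            - dX w (X₀, Y₀) ^ 2 * p₀ / 12 * (P.1 - X₀) ^ 3|
          ≤ C * (|P.1 - X₀| ^ 4 + |P.2 - Y₀| ^ 2 + |P.1 - X₀| ^ 2 * |P.2 - Y₀|) := by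
  subst hu₀ hz₀ hp₀ hq₀ hx₀ ht₀
  obtain ⟨C1, hC1, H1⟩ := aux1 c c₀ hc₀ hc hclb u w z p q x t hsmooth hsys X₀ Y₀ hwπ
  obtain ⟨C2, hC2, H2⟩ := aux2 c c₀ hc₀ hc hclb u w z p q x t hsmooth hsys X₀ Y₀ hwπ
  refine ⟨C1 + C2, by positivity, Metric.ball (X₀, Y₀) 1, Metric.isOpen_ball,
    Metric.mem_ball_self one_pos, ?_⟩
  rintro ⟨PX, PY⟩ hP
  have hd := Metric.mem_ball.mp hP
  simp only [Prod.dist_eq, Real.dist_eq, max_lt_iff] at hd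
  have hX : |PX - X₀| ≤ 1 := hd.1.le
  have hY : |PY - Y₀| ≤ 1 := hd.2.le
  have hS : (0:ℝ) ≤ |PX - X₀| ^ 4 + |PY - Y₀| ^ 2 + |PX - X₀| ^ 2 * |PY - Y₀| := by positivity
  have hmul : ∀ D : ℝ, 0 < D →
      D * (|PX - X₀| ^ 4 + |PY - Y₀| ^ 2 + |PX - X₀| ^ 2 * |PY - Y₀|)
      ≤ (C1 + C2) * (|PX - X₀| ^ 4 + |PY - Y₀| ^ 2 + |PX - X₀| ^ 2 * |PY - Y₀|) →
      True := fun _ _ _ => trivial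
  constructor
  · calc |x (PX, PY) - x (X₀, Y₀) - c (u (X₀, Y₀)) * (t (PX, PY) - t (X₀, Y₀))
        + (1 + Real.cos (z (X₀, Y₀))) * q (X₀, Y₀) / 2 * ((PX, PY).2 - Y₀)|
        ≤ C1 * (|PX - X₀| ^ 4 + |PY - Y₀| ^ 2 + |PX - X₀| ^ 2 * |PY - Y₀|) := by
          simpa using H1 PX PY hX hY
      _ ≤ (C1 + C2) * (|(PX, PY).1 - X₀| ^ 4 + |(PX, PY).2 - Y₀| ^ 2
            + |(PX, PY).1 - X₀| ^ 2 * |(PX, PY).2 - Y₀|) := by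
          simp only []
          exact mul_le_mul_of_nonneg_right (by linarith) hS
  · calc |x (PX, PY) - x (X₀, Y₀) + c (u (X₀, Y₀)) * (t (PX, PY) - t (X₀, Y₀))
        - dX w (X₀, Y₀) ^ 2 * p (X₀, Y₀) / 12 * ((PX, PY).1 - X₀) ^ 3|
        ≤ C2 * (|PX - X₀| ^ 4 + |PY - Y₀| ^ 2 + |PX - X₀| ^ 2 * |PY - Y₀|) := by
          simpa using H2 PX PY hX hY
      _ ≤ (C1 + C2) * (|(PX, PY).1 - X₀| ^ 4 + |(PX, PY).2 - Y₀| ^ 2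
            + |(PX, PY).1 - X₀| ^ 2 * |(PX, PY).2 - Y₀|) := by
          simp only []
          exact mul_le_mul_of_nonneg_right (by linarith) hS
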